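/- Let λ be a partition of 2p in which every part occurs with even multiplicity, and assume λ has distinct column lengths; let 0 = k_0 < k_1 < ⋯ < k_m be the column lengths of λ listed increasingly (each difference k_s − k_{s−1} is even). Then the number of connected components of Γ_DIII(λ;p,p) equals #syd_DIII(λ;p,p) (the graph has no edges) and equals ∏_{1 ≤ s ≤ m, λ_{k_s} even} (1 + (k_s − k_{s−1})/2). -/

import Mathlib

open Finset

/-- A partition of `n`, given by the function `l` listing its parts in weakly
decreasing order: `l j = λ_j` is the `j`-th part for `1 ≤ j ≤ len`, and
`l j = 0` for `j > len`. -/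
structure PartitionData : Type where
  l : ℕ → ℕ
  len : ℕ
  anti : ∀ j, 1 ≤ j → l (j + 1) ≤ l j
  pos : ∀ j, 1 ≤ j → (0 < l j ↔ j ≤ len)

namespace PartitionData

/-- The multiplicity `m(i)` of `i` as a part of the partition. -/
def mult (P : PartitionData) (i : ℕ) : ℕ :=
  ((Finset.Icc 1 P.len).filter (fun j => P.l j = i)).card

/-- The finite set of (distinct) parts of the partition. -/
def partsSet (P : PartitionData) : Finset ℕ :=
  (Finset.Icc 1 P.len).image P.l

/-- The sum of the parts (i.e. the number `n` the partition partitions). -/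
def boxSum (P : PartitionData) : ℕ := ∑ j ∈ Finset.Icc 1 P.len, P.l j

/-- The number of odd parts of the partition. -/
def oddCount (P : PartitionData) : ℕ :=
  ((Finset.Icc 1 P.len).filter (fun j => Odd (P.l j))).card

end PartitionData

/-- A signed Young diagram of shape `P` and signature `(p, q)`, encoded by the
function `f` sending each part length `i` to `m_T⁺(i)`, the number of rows of
length `i` whose leading sign is `+`.  A row of length `i` with leading sign
`+` has `(i+1)/2` plus-boxes and `i/2` minus-boxes, and vice versa. -/
structure SYD (P : PartitionData) (p q : ℕ) : Type where
  f : ℕ → ℕ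
  le_mult : ∀ i, f i ≤ P.mult i
  plus_eq : ∑ i ∈ P.partsSet, (f i * ((i + 1) / 2) + (P.mult i - f i) * (i / 2)) = p
  minus_eq : ∑ i ∈ P.partsSet, (f i * (i / 2) + (P.mult i - f i) * ((i + 1) / 2)) = q

/-- `i` and `j` are consecutive distinct parts: `i > j` with no part strictly
in between (so if the distinct parts are `i_1 > ⋯ > i_k`, the pairs are
`(i_r, i_{r+1})`). -/
def Consec (P : PartitionData) (i j : ℕ) : Prop :=
  i ∈ P.partsSet ∧ j ∈ P.partsSet ∧ j < i ∧ ∀ x ∈ P.partsSet, ¬ (j < x ∧ x < i)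

/-- `j` is the smallest part `i_k`. -/
def IsMinPart (P : PartitionData) (j : ℕ) : Prop :=
  j ∈ P.partsSet ∧ ∀ x ∈ P.partsSet, j ≤ x

/-- Adjacency of signed Young diagrams with step `c`:
`π(T) - π(T') ∈ {±c(e_r - e_{r+1})} ∪ {±c e_k}` in the coordinates indexed by
the distinct parts `i_1 > ⋯ > i_k`. -/
def AdjRel (P : PartitionData) {p q : ℕ} (c : ℕ) (T T' : SYD P p q) : Prop :=
  (∃ i j, Consec P i j ∧ (∀ x, x ≠ i → x ≠ j → T.f x = T'.f x) ∧
    ((T.f i = T'.f i + c ∧ T'.f j = T.f j + c) ∨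
      (T'.f i = T.f i + c ∧ T.f j = T'.f j + c)))
  ∨ (∃ j, IsMinPart P j ∧ (∀ x, x ≠ j → T.f x = T'.f x) ∧
      (T.f j = T'.f j + c ∨ T'.f j = T.f j + c))

/-- The orbit graph `Γ(λ;p,q)` (type AIII). -/
def orbitGraph (P : PartitionData) (p q : ℕ) : SimpleGraph (SYD P p q) :=
  SimpleGraph.fromRel (AdjRel P 1)

/-- Type BDI: `m_T⁺(i) = m(i)/2` for every even part length `i`. -/
def SYD.IsBDI {P : PartitionData} {p q : ℕ} (T : SYD P p q) : Prop :=
  ∀ i, Even i → 2 * T.f i = P.mult i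

/-- Type CI: `p = q` and `m_T⁺(i) = m(i)/2` for every odd part length `i`. -/
def SYD.IsCI {P : PartitionData} {p q : ℕ} (T : SYD P p q) : Prop :=
  p = q ∧ ∀ i, Odd i → 2 * T.f i = P.mult i

/-- Type CII: `p`, `q` even, `m_T⁺(i) = m(i)/2` for every even part length `i`,
and `m(i)`, `m_T⁺(i)` even for every odd part length `i`. -/
def SYD.IsCII {P : PartitionData} {p q : ℕ} (T : SYD P p q) : Prop :=
  Even p ∧ Even q ∧ (∀ i, Even i → 2 * T.f i = P.mult i) ∧
    ∀ i, Odd i → Even (P.mult i) ∧ Even (T.f i)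

/-- Type DIII: `p = q`, `m_T⁺(i) = m(i)/2` for every odd part length `i`, and
`m(i)`, `m_T⁺(i)` even for every even part length `i`. -/
def SYD.IsDIII {P : PartitionData} {p q : ℕ} (T : SYD P p q) : Prop :=
  p = q ∧ (∀ i, Odd i → 2 * T.f i = P.mult i) ∧
    ∀ i, Even i → Even (P.mult i) ∧ Even (T.f i)

/-- The orbit graph `Γ_X(λ;p,q)` on the vertices `syd_X(λ;p,q)` (given by the
predicate `Pr`), with step `c` (`c = 1` for X = BDI, CI and `c = 2` for
X = CII, DIII). -/
def orbitGraphX (P : PartitionData) (p q c : ℕ) (Pr : SYD P p q → Prop) :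
    SimpleGraph {T : SYD P p q // Pr T} :=
  SimpleGraph.fromRel (fun T T' => AdjRel P c T.1 T'.1)

/-- The set of column lengths of `λ`: those `h ≥ 1` with `λ_h - λ_{h+1} > 0`. -/
def colSet (P : PartitionData) : Finset ℕ :=
  (Finset.Icc 1 P.len).filter (fun h => P.l (h + 1) < P.l h)

section Aux
variable (P : PartitionData)

lemma l_zero {j : ℕ} (h1 : 1 ≤ j) (h2 : P.len < j) : P.l j = 0 := by
  have := P.pos j h1
  omega

lemma mem_colSet {h : ℕ} : h ∈ colSet P ↔ 1 ≤ h ∧ P.l (h+1) < P.l h := by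
  constructor
  · intro hh
    simp only [colSet, Finset.mem_filter, Finset.mem_Icc] at hh
    exact ⟨hh.1.1, hh.2⟩
  · rintro ⟨h1, h2⟩
    simp only [colSet, Finset.mem_filter, Finset.mem_Icc]
    refine ⟨⟨h1, ?_⟩, h2⟩
    by_contra hc
    have := l_zero P h1 (by omega)
    omega

lemma l_eq_card (hdist : ∀ j, 1 ≤ j → P.l j - P.l (j + 1) ≤ 1) :
    ∀ j, 1 ≤ j → P.l j = ((colSet P).filter (fun h => j ≤ h)).card := by
  have key : ∀ d j, 1 ≤ j → P.len + 1 ≤ j + d →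
      P.l j = ((colSet P).filter (fun h => j ≤ h)).card := by
    intro d
    induction d with
    | zero =>
      intro j h1 h2
      rw [l_zero P h1 (by omega)]
      symm
      rw [Finset.card_eq_zero, Finset.filter_eq_empty_iff]
      intro h hh
      have h2' := (mem_colSet P).1 hh
      have hle : h ≤ P.len := (P.pos h (by omega)).1 (by omega)
      omega
    | succ d ih =>
      intro j h1 h2
      by_cases hc : P.len + 1 ≤ j + d
      · exact ih j h1 hc
      have ihj : P.l (j+1) = ((colSet P).filter (fun h => j+1 ≤ h)).card :=
        ih (j+1) (by omega) (by omega)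
      have hsplit : (colSet P).filter (fun h => j ≤ h)
          = ((colSet P).filter (fun h => j+1 ≤ h)) ∪ ((colSet P).filter (fun h => h = j)) := by
        ext h
        simp only [Finset.mem_filter, Finset.mem_union]
        constructor
        · rintro ⟨hh, hj⟩
          rcases Nat.lt_or_ge h (j+1) with h' | h'
          · exact Or.inr ⟨hh, by omega⟩
          · exact Or.inl ⟨hh, h'⟩
        · rintro (⟨hh, hj⟩ | ⟨hh, hj⟩) <;> exact ⟨hh, by omega⟩
      have hdisj : Disjoint ((colSet P).filter (fun h => j+1 ≤ h))
          ((colSet P).filter (fun h => h = j)) := by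
        simp only [Finset.disjoint_left, Finset.mem_filter]
        rintro h ⟨_, hh⟩ ⟨_, rfl⟩
        omega
      rw [hsplit, Finset.card_union_of_disjoint hdisj, ← ihj]
      have hcase : ((colSet P).filter (fun h => h = j)).card = if j ∈ colSet P then 1 else 0 := by
        split_ifs with hj
        · rw [Finset.filter_eq', if_pos hj, Finset.card_singleton]
        · rw [Finset.filter_eq', if_neg hj, Finset.card_empty]
      rw [hcase]
      have hanti := P.anti j h1
      have hd := hdist j h1
      by_cases hj : j ∈ colSet P
      · rw [if_pos hj]
        have := (mem_colSet P).1 hj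
        omega
      · rw [if_neg hj]
        have : ¬ (1 ≤ j ∧ P.l (j+1) < P.l j) := fun h' => hj ((mem_colSet P).2 h')
        omega
  intro j h1
  exact key (P.len + 1) j h1 (by omega)

end Aux

section Aux2
variable {P : PartitionData} {m : ℕ} {k : ℕ → ℕ}
variable (hdist : ∀ j, 1 ≤ j → P.l j - P.l (j + 1) ≤ 1)
variable (hk0 : k 0 = 0) (hkmono : StrictMonoOn k (Set.Icc 0 m))
variable (hkim : (Finset.Icc 1 m).image k = colSet P)
include hdist hk0 hkmono hkim
set_option linter.unusedSectionVars false

lemma k_mono : ∀ a b : ℕ, a ≤ b → b ≤ m → k a ≤ k b := by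
  intro a b hab hbm
  rcases Nat.eq_or_lt_of_le hab with rfl | h
  · exact le_refl _
  · exact le_of_lt (hkmono (Set.mem_Icc.2 ⟨Nat.zero_le _, by omega⟩)
      (Set.mem_Icc.2 ⟨Nat.zero_le _, hbm⟩) h)

lemma k_strict : ∀ a b : ℕ, a < b → b ≤ m → k a < k b := by
  intro a b hab hbm
  exact hkmono (Set.mem_Icc.2 ⟨Nat.zero_le _, by omega⟩)
    (Set.mem_Icc.2 ⟨Nat.zero_le _, hbm⟩) hab

lemma k_mem_colSet {s : ℕ} (h1 : 1 ≤ s) (h2 : s ≤ m) : k s ∈ colSet P := by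
  rw [← hkim]
  exact Finset.mem_image_of_mem k (Finset.mem_Icc.2 ⟨h1, h2⟩)

lemma k_pos {s : ℕ} (h1 : 1 ≤ s) (h2 : s ≤ m) : 1 ≤ k s :=
  ((mem_colSet P).1 (k_mem_colSet hdist hk0 hkmono hkim h1 h2)).1

lemma colSet_le_len {h : ℕ} (hh : h ∈ colSet P) : h ≤ P.len := by
  simp only [colSet, Finset.mem_filter, Finset.mem_Icc] at hh
  exact hh.1.2

/-- l j equals the number of t ∈ [1,m] with j ≤ k t. -/
lemma l_eq_cnt : ∀ j, 1 ≤ j →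
    P.l j = ((Finset.Icc 1 m).filter (fun t => j ≤ k t)).card := by
  intro j hj
  rw [l_eq_card P hdist j hj, ← hkim, Finset.filter_image]
  apply Finset.card_image_of_injOn
  apply hkmono.injOn.mono
  intro a ha
  simp only [Finset.coe_filter, Set.mem_setOf_eq, Finset.mem_Icc] at ha
  exact Set.mem_Icc.2 ⟨Nat.zero_le _, ha.1.2⟩

lemma l_between {s j : ℕ} (h1 : 1 ≤ s) (h2 : s ≤ m)
    (hj1 : k (s-1) < j) (hj2 : j ≤ k s) : P.l j = m + 1 - s := by
  have hj : 1 ≤ j := by omega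
  rw [l_eq_cnt hdist hk0 hkmono hkim j hj]
  have : (Finset.Icc 1 m).filter (fun t => j ≤ k t) = Finset.Icc s m := by
    ext t
    simp only [Finset.mem_filter, Finset.mem_Icc]
    constructor
    · rintro ⟨⟨ht1, ht2⟩, hjt⟩
      refine ⟨?_, ht2⟩
      by_contra hc
      have : k t ≤ k (s-1) := k_mono hdist hk0 hkmono hkim t (s-1) (by omega) (by omega)
      omega
    · rintro ⟨hst, htm⟩
      have : k s ≤ k t := k_mono hdist hk0 hkmono hkim s t hst htm
      exact ⟨⟨by omega, htm⟩, by omega⟩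
  rw [this, Nat.card_Icc]

lemma km_eq_len : k m = P.len := by
  by_cases hm : m = 0
  · subst hm
    rw [hk0]
    by_contra hc
    have hlen : 1 ≤ P.len := by omega
    have : P.len ∈ colSet P := by
      rw [mem_colSet]
      refine ⟨hlen, ?_⟩
      have h0 : P.l (P.len + 1) = 0 := l_zero P (by omega) (by omega)
      have h1 : 0 < P.l P.len := (P.pos P.len hlen).2 (le_refl _)
      omega
    rw [← hkim] at this
    simp at this
  · have hm1 : 1 ≤ m := by omega
    have h1 : k m ≤ P.len := colSet_le_len hdist hk0 hkmono hkim (k_mem_colSet hdist hk0 hkmono hkim hm1 (le_refl _))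
    have hlen : 1 ≤ P.len := le_trans (k_pos hdist hk0 hkmono hkim hm1 (le_refl m)) h1
    have : P.len ∈ colSet P := by
      rw [mem_colSet]
      refine ⟨hlen, ?_⟩
      have h0 : P.l (P.len + 1) = 0 := l_zero P (by omega) (by omega)
      have hp : 0 < P.l P.len := (P.pos P.len hlen).2 (le_refl _)
      omega
    rw [← hkim] at this
    obtain ⟨t, ht, hteq⟩ := Finset.mem_image.1 this
    rw [← hteq]
    simp only [Finset.mem_Icc] at ht
    rw [← hteq] at h1
    exact le_antisymm h1 (k_mono hdist hk0 hkmono hkim t m ht.2 (le_refl m))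

lemma l_range {j : ℕ} (h1 : 1 ≤ j) (h2 : j ≤ P.len) :
    1 ≤ P.l j ∧ P.l j ≤ m := by
  constructor
  · exact (P.pos j h1).2 h2
  · rw [l_eq_cnt hdist hk0 hkmono hkim j h1]
    calc ((Finset.Icc 1 m).filter (fun t => j ≤ k t)).card
        ≤ (Finset.Icc 1 m).card := Finset.card_filter_le _ _
      _ = m := by rw [Nat.card_Icc]; omega

lemma partsSet_eq : P.partsSet = Finset.Icc 1 m := by
  ext v
  simp only [PartitionData.partsSet, Finset.mem_image, Finset.mem_Icc]
  constructor
  · rintro ⟨j, hj, rfl⟩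
    exact l_range hdist hk0 hkmono hkim hj.1 hj.2
  · rintro ⟨hv1, hv2⟩
    refine ⟨k (m + 1 - v), ⟨k_pos hdist hk0 hkmono hkim (by omega) (by omega), ?_⟩, ?_⟩
    · rw [← km_eq_len hdist hk0 hkmono hkim]
      exact k_mono hdist hk0 hkmono hkim _ m (by omega) (le_refl m)
    · have := l_between hdist hk0 hkmono hkim (s := m + 1 - v) (j := k (m+1-v))
        (by omega) (by omega) (k_strict hdist hk0 hkmono hkim _ _ (by omega) (by omega)) (le_refl _)
      rw [this]
      omega

lemma mult_eq {s : ℕ} (h1 : 1 ≤ s) (h2 : s ≤ m) :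
    P.mult (m + 1 - s) = k s - k (s - 1) := by
  have hfil : (Finset.Icc 1 P.len).filter (fun j => P.l j = m + 1 - s)
      = Finset.Ioc (k (s-1)) (k s) := by
    ext j
    simp only [Finset.mem_filter, Finset.mem_Icc, Finset.mem_Ioc]
    constructor
    · rintro ⟨⟨hj1, hj2⟩, hlj⟩
      rw [l_eq_cnt hdist hk0 hkmono hkim j hj1] at hlj
      constructor
      · by_contra hc
        push_neg at hc
        have hs2 : 2 ≤ s := by
          by_contra hcc
          have hs1 : s = 1 := by omega
          subst hs1
          norm_num at hc
          rw [hk0] at hc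
          omega
        have hsub : Finset.Icc (s-1) m ⊆ (Finset.Icc 1 m).filter (fun t => j ≤ k t) := by
          intro t ht
          simp only [Finset.mem_Icc] at ht
          simp only [Finset.mem_filter, Finset.mem_Icc]
          refine ⟨⟨by omega, ht.2⟩, ?_⟩
          calc j ≤ k (s-1) := hc
            _ ≤ k t := k_mono hdist hk0 hkmono hkim _ _ ht.1 ht.2
        have := Finset.card_le_card hsub
        rw [Nat.card_Icc] at this
        omega
      · by_contra hc
        push_neg at hc
        have hsub : (Finset.Icc 1 m).filter (fun t => j ≤ k t) ⊆ Finset.Icc (s+1) m := by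
          intro t ht
          simp only [Finset.mem_filter, Finset.mem_Icc] at ht
          simp only [Finset.mem_Icc]
          refine ⟨?_, ht.1.2⟩
          by_contra hc2
          have : k t ≤ k s := k_mono hdist hk0 hkmono hkim t s (by omega) h2
          omega
        have := Finset.card_le_card hsub
        rw [Nat.card_Icc] at this
        omega
    · rintro ⟨hj1, hj2⟩
      have hj : 1 ≤ j := by
        rcases Nat.eq_or_lt_of_le h1 with h | h
        · rw [← h] at hj1
          norm_num at hj1
          rw [hk0] at hj1
          omega
        · have : 1 ≤ k (s-1) := k_pos hdist hk0 hkmono hkim (by omega) (by omega)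
          omega
      refine ⟨⟨hj, ?_⟩, l_between hdist hk0 hkmono hkim h1 h2 hj1 hj2⟩
      calc j ≤ k s := hj2
        _ ≤ k m := k_mono hdist hk0 hkmono hkim s m h2 (le_refl m)
        _ = P.len := km_eq_len hdist hk0 hkmono hkim
  rw [PartitionData.mult, hfil, Nat.card_Ioc]

lemma mult_eq' {v : ℕ} (h1 : 1 ≤ v) (h2 : v ≤ m) :
    P.mult v = k (m + 1 - v) - k (m - v) := by
  have := mult_eq hdist hk0 hkmono hkim (s := m + 1 - v) (by omega) (by omega)
  have hv : m + 1 - (m + 1 - v) = v := by omega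
  have hv2 : m + 1 - v - 1 = m - v := by omega
  rw [hv, hv2] at this
  exact this

lemma mult_zero {v : ℕ} (hv : ¬ (1 ≤ v ∧ v ≤ m)) : P.mult v = 0 := by
  rw [PartitionData.mult, Finset.card_eq_zero, Finset.filter_eq_empty_iff]
  intro j hj
  simp only [Finset.mem_Icc] at hj
  have := l_range hdist hk0 hkmono hkim hj.1 hj.2
  omega

lemma sum_mult_mul : ∑ i ∈ P.partsSet, P.mult i * i = P.boxSum := by
  rw [PartitionData.boxSum]
  rw [← Finset.sum_fiberwise_of_maps_to (g := P.l) (t := P.partsSet)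
    (fun j hj => Finset.mem_image_of_mem P.l hj)]
  apply Finset.sum_congr rfl
  intro i _
  have hcg : ∀ j ∈ (Finset.Icc 1 P.len).filter (fun j => P.l j = i), P.l j = i :=
    fun j hj => (Finset.mem_filter.1 hj).2
  rw [Finset.sum_congr rfl hcg, Finset.sum_const, smul_eq_mul, PartitionData.mult]

end Aux2

lemma SYD.ext' {P : PartitionData} {p q : ℕ} {T T' : SYD P p q} (h : T.f = T'.f) :
    T = T' := by
  cases T
  cases T'
  simp only at h
  subst h
  rfl

section Aux3
variable {P : PartitionData} {m : ℕ} {k : ℕ → ℕ}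
variable (hdist : ∀ j, 1 ≤ j → P.l j - P.l (j + 1) ≤ 1)
variable (hk0 : k 0 = 0) (hkmono : StrictMonoOn k (Set.Icc 0 m))
variable (hkim : (Finset.Icc 1 m).image k = colSet P)
include hdist hk0 hkmono hkim
set_option linter.unusedSectionVars false

lemma syd_sums {p : ℕ} (hn : P.boxSum = p + p) (g : ℕ → ℕ)
    (hle : ∀ i, g i ≤ P.mult i) (hodd : ∀ i, Odd i → 2 * g i = P.mult i) :
    (∑ i ∈ P.partsSet, (g i * ((i + 1) / 2) + (P.mult i - g i) * (i / 2)) = p) ∧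
    (∑ i ∈ P.partsSet, (g i * (i / 2) + (P.mult i - g i) * ((i + 1) / 2)) = p) := by
  have key : ∀ i, 2 * (g i * ((i + 1) / 2) + (P.mult i - g i) * (i / 2)) = P.mult i * i
           ∧ 2 * (g i * (i / 2) + (P.mult i - g i) * ((i + 1) / 2)) = P.mult i * i := by
    intro i
    rcases Nat.even_or_odd i with he | ho
    · obtain ⟨c, hc⟩ := he
      subst hc
      have h1 : (c + c + 1) / 2 = c := by omega
      have h2 : (c + c) / 2 = c := by omega
      rw [h1, h2]
      constructor <;>
      · rw [← add_mul, Nat.add_sub_cancel' (hle _)]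
        ring
    · obtain ⟨c, hc⟩ := ho
      have hm := hodd i ⟨c, hc⟩
      subst hc
      have h1 : (2 * c + 1 + 1) / 2 = c + 1 := by omega
      have h2 : (2 * c + 1) / 2 = c := by omega
      have h3 : P.mult (2 * c + 1) - g (2 * c + 1) = g (2 * c + 1) := by omega
      rw [h1, h2, h3, ← hm]
      constructor <;> ring
  have hsum := sum_mult_mul (P := P) hdist hk0 hkmono hkim
  constructor <;>
  · have h2 : ∀ S : ℕ, 2 * S = p + p → S = p := fun S h => by omega
    apply h2
    rw [Finset.mul_sum, ← hn, ← hsum]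
    exact Finset.sum_congr rfl fun i _ => by
      first
        | exact (key i).1
        | exact (key i).2

end Aux3

/-- The count function for each index `s`. -/
def cfun (m : ℕ) (k : ℕ → ℕ) (s : ℕ) : ℕ :=
  if Even (m + 1 - s) then (k s - k (s - 1)) / 2 + 1 else 1

/-- The `f`-function of a DIII diagram built from the data `g`. -/
def mkF (m : ℕ) (k : ℕ → ℕ) (g : (Finset.Icc 1 m : Finset ℕ) → ℕ) : ℕ → ℕ :=
  fun v =>
    if hv : 1 ≤ v ∧ v ≤ m then
      (if Even v then 2 * g ⟨m + 1 - v, by simp only [Finset.mem_Icc]; omega⟩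
       else (k (m + 1 - v) - k (m - v)) / 2)
    else 0

section Aux4
variable {P : PartitionData} {p m : ℕ} {k : ℕ → ℕ}
variable (hn : P.boxSum = p + p)
variable (hmult : ∀ i, Even (P.mult i))
variable (hdist : ∀ j, 1 ≤ j → P.l j - P.l (j + 1) ≤ 1)
variable (hk0 : k 0 = 0) (hkmono : StrictMonoOn k (Set.Icc 0 m))
variable (hkim : (Finset.Icc 1 m).image k = colSet P)
include hn hmult hdist hk0 hkmono hkim
set_option linter.unusedSectionVars false

lemma mkF_le_mult (g : (Finset.Icc 1 m : Finset ℕ) → ℕ)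
    (hg : ∀ s, g s < cfun m k s) : ∀ v, mkF m k g v ≤ P.mult v := by
  intro v
  rw [mkF]
  by_cases hv : 1 ≤ v ∧ v ≤ m
  · rw [dif_pos hv]
    have hmv := mult_eq' hdist hk0 hkmono hkim hv.1 hv.2
    by_cases hev : Even v
    · rw [if_pos hev]
      have hb : (g ⟨m + 1 - v, by simp only [Finset.mem_Icc]; omega⟩ : ℕ)
          < cfun m k (m + 1 - v) := hg _
      rw [cfun] at hb
      have hcond : Even (m + 1 - (m + 1 - v)) := by
        rwa [show m + 1 - (m + 1 - v) = v from by omega]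
      rw [if_pos hcond] at hb
      have heq : m + 1 - v - 1 = m - v := by omega
      rw [heq] at hb
      have hem : Even (P.mult v) := hmult v
      obtain ⟨c, hc⟩ := hem
      omega
    · rw [if_neg hev, ← hmv]
      exact Nat.div_le_self _ _
  · rw [dif_neg hv]
    exact Nat.zero_le _

lemma mkF_odd (g : (Finset.Icc 1 m : Finset ℕ) → ℕ) :
    ∀ i, Odd i → 2 * mkF m k g i = P.mult i := by
  intro i hi
  rw [mkF]
  by_cases hv : 1 ≤ i ∧ i ≤ m
  · rw [dif_pos hv, if_neg (Nat.not_even_iff_odd.2 hi)]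
    rw [← mult_eq' hdist hk0 hkmono hkim hv.1 hv.2]
    obtain ⟨c, hc⟩ := hmult i
    omega
  · rw [dif_neg hv, mult_zero hdist hk0 hkmono hkim hv]

lemma mkF_even (g : (Finset.Icc 1 m : Finset ℕ) → ℕ) :
    ∀ i, Even i → Even (P.mult i) ∧ Even (mkF m k g i) := by
  intro i hi
  refine ⟨hmult i, ?_⟩
  rw [mkF]
  by_cases hv : 1 ≤ i ∧ i ≤ m
  · rw [dif_pos hv, if_pos hi]
    exact even_two_mul _
  · rw [dif_neg hv]
    exact Even.zero

/-- The diagram associated to bounded data `g`. -/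
def Phi (g : (s : (Finset.Icc 1 m : Finset ℕ)) → Fin (cfun m k s)) :
    {T : SYD P p p // T.IsDIII} :=
  ⟨⟨mkF m k (fun s => (g s).1),
    mkF_le_mult hn hmult hdist hk0 hkmono hkim _ (fun s => (g s).2),
    (syd_sums hdist hk0 hkmono hkim hn _
      (mkF_le_mult hn hmult hdist hk0 hkmono hkim _ (fun s => (g s).2))
      (mkF_odd hn hmult hdist hk0 hkmono hkim _)).1,
    (syd_sums hdist hk0 hkmono hkim hn _
      (mkF_le_mult hn hmult hdist hk0 hkmono hkim _ (fun s => (g s).2))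
      (mkF_odd hn hmult hdist hk0 hkmono hkim _)).2⟩,
    rfl, mkF_odd hn hmult hdist hk0 hkmono hkim (fun s => (g s).1),
    mkF_even hn hmult hdist hk0 hkmono hkim (fun s => (g s).1)⟩

lemma Phi_bij : Function.Bijective (Phi hn hmult hdist hk0 hkmono hkim) := by
  constructor
  · intro g g' hgg
    have hf : ∀ v, mkF m k (fun s => (g s).1) v = mkF m k (fun s => (g' s).1) v := by
      intro v
      have := congrArg (fun T => T.1.f v) hgg
      simpa [Phi] using this
    funext s
    obtain ⟨s, hmem⟩ := s
    have hs := Finset.mem_Icc.1 hmem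
    set v := m + 1 - s with hvdef
    have hv : 1 ≤ v ∧ v ≤ m := by omega
    have hsv : m + 1 - v = s := by omega
    have hfv := hf v
    rw [mkF, mkF, dif_pos hv, dif_pos hv] at hfv
    by_cases hev : Even v
    · rw [if_pos hev, if_pos hev] at hfv
      apply Fin.ext
      have heqs : (⟨m + 1 - v, by simp only [Finset.mem_Icc]; omega⟩ :
          (Finset.Icc 1 m : Finset ℕ)) = ⟨s, hmem⟩ := Subtype.ext hsv
      rw [heqs] at hfv
      omega
    · -- cfun s = 1, so Fin 1 is a subsingleton
      have h1 : cfun m k s = 1 := by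
        rw [cfun, if_neg (by rwa [← hvdef])]
      apply Fin.ext
      have hg1 : ((g ⟨s, hmem⟩ : Fin _) : ℕ) < 1 :=
        lt_of_lt_of_le (g ⟨s, hmem⟩).2 (le_of_eq h1)
      have hg2 : ((g' ⟨s, hmem⟩ : Fin _) : ℕ) < 1 :=
        lt_of_lt_of_le (g' ⟨s, hmem⟩).2 (le_of_eq h1)
      omega
  · rintro ⟨T, hT⟩
    refine ⟨fun s => if h : Even (m + 1 - (s : ℕ)) then
        ⟨T.f (m + 1 - (s : ℕ)) / 2, ?_⟩ else ⟨0, ?_⟩, ?_⟩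
    · rw [cfun, if_pos h]
      have hs : 1 ≤ (s:ℕ) ∧ (s:ℕ) ≤ m := Finset.mem_Icc.1 s.2
      have hle := T.le_mult (m + 1 - (s:ℕ))
      rw [mult_eq' hdist hk0 hkmono hkim (by omega : 1 ≤ m + 1 - (s:ℕ)) (by omega)] at hle
      rw [show m + 1 - (m + 1 - (s:ℕ)) = (s:ℕ) from by omega,
          show m - (m + 1 - (s:ℕ)) = (s:ℕ) - 1 from by omega] at hle
      omega
    · rw [cfun, if_neg h]
      omega
    · apply Subtype.ext
      apply SYD.ext'
      funext v
      simp only [Phi, mkF]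
      by_cases hv : 1 ≤ v ∧ v ≤ m
      · rw [dif_pos hv]
        have heq : m + 1 - (m + 1 - v) = v := by omega
        by_cases hev : Even v
        · rw [if_pos hev]
          simp only [Subtype.coe_mk, heq]
          rw [dif_pos hev]
          have hevf := (hT.2.2 v hev).2
          obtain ⟨c, hc⟩ := hevf
          simp only [Subtype.coe_mk]
          omega
        · rw [if_neg hev]
          have h2f := hT.2.1 v (Nat.not_even_iff_odd.1 hev)
          rw [← mult_eq' hdist hk0 hkmono hkim hv.1 hv.2]
          omega
      · rw [dif_neg hv]
        have hle := T.le_mult v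
        rw [mult_zero hdist hk0 hkmono hkim hv] at hle
        omega

lemma card_DIII :
    Nat.card {T : SYD P p p // T.IsDIII} =
      ∏ s ∈ (Finset.Icc 1 m).filter (fun s => Even (P.l (k s))),
        (1 + (k s - k (s - 1)) / 2) := by
  have h1 : Nat.card {T : SYD P p p // T.IsDIII}
      = Nat.card ((s : (Finset.Icc 1 m : Finset ℕ)) → Fin (cfun m k s)) :=
    (Nat.card_eq_of_bijective _ (Phi_bij hn hmult hdist hk0 hkmono hkim)).symm
  rw [h1, Nat.card_pi]
  have h2 : ∀ s : (Finset.Icc 1 m : Finset ℕ), Nat.card (Fin (cfun m k s)) = cfun m k s :=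
    fun s => Nat.card_eq_fintype_card.trans (Fintype.card_fin _)
  rw [Finset.prod_congr rfl (fun s _ => h2 s), Finset.prod_coe_sort]
  rw [Finset.prod_filter]
  apply Finset.prod_congr rfl
  intro s hs
  simp only [Finset.mem_Icc] at hs
  have hls : P.l (k s) = m + 1 - s :=
    l_between hdist hk0 hkmono hkim hs.1 hs.2
      (k_strict hdist hk0 hkmono hkim _ _ (by omega) hs.2) (le_refl _)
  rw [hls, cfun]
  split_ifs with h
  · omega
  · rfl

end Aux4

section Aux5
variable {P : PartitionData} {m : ℕ} {k : ℕ → ℕ}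
variable (hdist : ∀ j, 1 ≤ j → P.l j - P.l (j + 1) ≤ 1)
variable (hk0 : k 0 = 0) (hkmono : StrictMonoOn k (Set.Icc 0 m))
variable (hkim : (Finset.Icc 1 m).image k = colSet P)
include hdist hk0 hkmono hkim
set_option linter.unusedSectionVars false

lemma adj_false {p : ℕ} (T T' : SYD P p p) (hT : T.IsDIII) (hT' : T'.IsDIII) :
    ¬ AdjRel P 2 T T' := by
  rintro (⟨i, j, ⟨hi, hj, hij, hbet⟩, _, hor⟩ | ⟨j, ⟨hjmem, hjmin⟩, _, hor⟩)
  · rw [partsSet_eq hdist hk0 hkmono hkim] at hi hj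
    have hi' := Finset.mem_Icc.1 hi
    have hj' := Finset.mem_Icc.1 hj
    have hij1 : i = j + 1 := by
      by_contra hne
      exact hbet (j+1)
        (by rw [partsSet_eq hdist hk0 hkmono hkim]
            exact Finset.mem_Icc.2 ⟨by omega, by omega⟩) ⟨by omega, by omega⟩
    rcases Nat.even_or_odd j with he | ho
    · have hoi : Odd i := by
        obtain ⟨c, hc⟩ := he
        exact ⟨c, by omega⟩
      have h1 := hT.2.1 i hoi
      have h2 := hT'.2.1 i hoi
      rcases hor with ⟨ha, hb⟩ | ⟨ha, hb⟩ <;> omega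
    · have h1 := hT.2.1 j ho
      have h2 := hT'.2.1 j ho
      rcases hor with ⟨ha, hb⟩ | ⟨ha, hb⟩ <;> omega
  · rw [partsSet_eq hdist hk0 hkmono hkim] at hjmem
    have hj' := Finset.mem_Icc.1 hjmem
    have hle1 := hjmin 1
      (by rw [partsSet_eq hdist hk0 hkmono hkim]
          exact Finset.mem_Icc.2 ⟨le_refl _, by omega⟩)
    have hj1 : j = 1 := by omega
    subst hj1
    have h1 := hT.2.1 1 ⟨0, rfl⟩
    have h2 := hT'.2.1 1 ⟨0, rfl⟩
    rcases hor with ha | ha <;> omega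

lemma graph_bot {p : ℕ} : orbitGraphX P p p 2 SYD.IsDIII = ⊥ := by
  ext T T'
  simp only [orbitGraphX, SimpleGraph.fromRel_adj, SimpleGraph.bot_adj, iff_false, not_and]
  intro _
  rintro (h | h)
  · exact adj_false hdist hk0 hkmono hkim T.1 T'.1 T.2 T'.2 h
  · exact adj_false hdist hk0 hkmono hkim T'.1 T.1 T'.2 T.2 h

end Aux5

lemma card_components_bot (V : Type*) :
    Nat.card (⊥ : SimpleGraph V).ConnectedComponent = Nat.card V :=
  Nat.card_congr (Equiv.ofBijective (SimpleGraph.connectedComponentMk ⊥)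
    ⟨fun _ _ h => SimpleGraph.reachable_bot.1 (SimpleGraph.ConnectedComponent.exact h),
     fun c => c.exists_rep⟩).symm


/-- Type DIII: for `λ` a partition of `2p` with every part of even multiplicity
and with distinct column lengths `0 = k_0 < k_1 < ⋯ < k_m` (each difference
`k_s - k_{s-1}` is even), the graph `Γ_DIII(λ;p,p)` has no edges, so its number
of connected components equals `#syd_DIII(λ;p,p)`, which is
`∏_{s : λ_{k_s} even} (1 + (k_s - k_{s-1})/2)`. -/
theorem stmt18 (P : PartitionData) (p m : ℕ) (k : ℕ → ℕ)
    (hn : P.boxSum = p + p)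
    (hmult : ∀ i, Even (P.mult i))
    (hdist : ∀ j, 1 ≤ j → P.l j - P.l (j + 1) ≤ 1)
    (hk0 : k 0 = 0) (hkmono : StrictMonoOn k (Set.Icc 0 m))
    (hkim : (Finset.Icc 1 m).image k = colSet P) :
    (∀ s, 1 ≤ s → s ≤ m → Even (k s - k (s - 1))) ∧
    orbitGraphX P p p 2 SYD.IsDIII = ⊥ ∧
    Nat.card (orbitGraphX P p p 2 SYD.IsDIII).ConnectedComponent =
      Nat.card {T : SYD P p p // T.IsDIII} ∧
    Nat.card {T : SYD P p p // T.IsDIII} =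
      ∏ s ∈ (Finset.Icc 1 m).filter (fun s => Even (P.l (k s))),
        (1 + (k s - k (s - 1)) / 2) := by
  have hbot := graph_bot hdist hk0 hkmono hkim (p := p)
  refine ⟨?_, hbot, ?_, card_DIII hn hmult hdist hk0 hkmono hkim⟩
  · intro s hs1 hs2
    rw [← mult_eq hdist hk0 hkmono hkim hs1 hs2]
    exact hmult _
  · rw [hbot]
    exact card_components_bot _
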